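/- In a free product G = A * B with A and B nontrivial, the free factor A is equal to its own normalizer in G. -/

import Mathlib

open Monoid CoprodI

namespace FreeFactorAux

variable {ι : Type*} {M : ι → Type*} [∀ i, Group (M i)]

theorem core (w : Word M) : ∀ {i : ι} (m : M i), m ≠ 1 →
    (Word.prod w ∈ (of : M i →* CoprodI M).range ∨
      ∃ (j : ι) (v : NeWord M j j), w.fstIdx = some j ∧ 2 ≤ v.toList.length ∧
        Word.prod w * of m * (Word.prod w)⁻¹ = v.prod) := by
  induction w using Word.consRecOn with
  | empty =>
    intro i m hm
    left
    exact ⟨1, by simp [Word.prod_empty]⟩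
  | cons k m₀ t ht1 hm₀ ih =>
    intro i m hm
    rcases ih m hm with ⟨a, ha⟩ | ⟨j, v, hfst, hlen, hv⟩
    · by_cases hki : k = i
      · subst hki
        left
        exact ⟨m₀ * a, by rw [map_mul, ha, Word.prod_cons]⟩
      · right
        refine ⟨k, (NeWord.singleton m₀ hm₀).append hki
          (((NeWord.singleton (a * m * a⁻¹) (by simp [hm])).append (Ne.symm hki)
            (NeWord.singleton m₀⁻¹ (inv_ne_one.2 hm₀)))), ?_, ?_, ?_⟩
        · simp
        · simp only [NeWord.toList, List.length_append, List.length_singleton]; omega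
        · rw [Word.prod_cons]
          rw [NeWord.append_prod, NeWord.append_prod, NeWord.prod_singleton,
            NeWord.prod_singleton, NeWord.prod_singleton, ← ha]
          simp only [map_mul, map_inv]
          group
    · have hjk : j ≠ k := by
        intro h; subst h; exact ht1 hfst
      right
      refine ⟨k, (NeWord.singleton m₀ hm₀).append (Ne.symm hjk)
          (v.append hjk (NeWord.singleton m₀⁻¹ (inv_ne_one.2 hm₀))), ?_, ?_, ?_⟩
      · simp
      · simp only [NeWord.toList, List.length_append, List.length_singleton]; omega
      · rw [Word.prod_cons]
        rw [NeWord.append_prod, NeWord.append_prod, NeWord.prod_singleton,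
          NeWord.prod_singleton, ← hv]
        simp only [map_inv]
        group

theorem equiv_of_length_le [DecidableEq ι] [∀ i, DecidableEq (M i)] {i : ι} (m : M i) :
    (Word.equiv (of m : CoprodI M)).toList.length ≤ 1 := by
  have hsymm : ∀ w : Word M, Word.equiv.symm w = Word.prod w := fun _ => rfl
  by_cases hm : m = 1
  · subst hm
    have : (of (1 : M i) : CoprodI M) = Word.prod Word.empty := by simp [Word.prod_empty]
    rw [this]
    have : Word.equiv (Word.prod (Word.empty : Word M)) = Word.empty := by
      rw [← hsymm]; exact Word.equiv.apply_symm_apply Word.empty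
    rw [this]
    simp [Word.empty]
  · have h2 : (Word.empty : Word M).fstIdx ≠ some i := by simp [Word.fstIdx, Word.empty]
    have : (of m : CoprodI M) = Word.prod (Word.cons m Word.empty h2 hm) := by
      rw [Word.prod_cons, Word.prod_empty, mul_one]
    rw [this]
    have : Word.equiv (Word.prod (Word.cons m Word.empty h2 hm))
        = Word.cons m Word.empty h2 hm := by
      rw [← hsymm]; exact Word.equiv.apply_symm_apply _
    rw [this]
    simp [Word.cons, Word.empty]

theorem normalizer_of_range (i : ι) [Nontrivial (M i)] :
    Subgroup.normalizer ((of : M i →* CoprodI M).range : Set (CoprodI M)) = (of : M i →* CoprodI M).range := by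
  classical
  refine le_antisymm ?_ Subgroup.le_normalizer
  intro g hg
  obtain ⟨m, hm⟩ := exists_ne (1 : M i)
  have h1 : g * of m * g⁻¹ ∈ (of : M i →* CoprodI M).range :=
    (Subgroup.mem_normalizer_iff.mp hg _).mp ⟨m, rfl⟩
  have hsymm : ∀ w : Word M, Word.equiv.symm w = Word.prod w := fun _ => rfl
  have hgw : Word.prod (Word.equiv g) = g := by
    rw [← hsymm]; exact Word.equiv.symm_apply_apply g
  rcases core (Word.equiv g) m hm with h | ⟨j, v, _, hlen, hv⟩
  · rwa [hgw] at h
  · exfalso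
    rw [hgw] at hv
    obtain ⟨m', hm'⟩ := h1
    have hvw : v.toWord = Word.equiv (of m') := by
      have h3 : Word.prod v.toWord = of m' := by rw [hm', hv]; rfl
      rw [← h3, ← hsymm]
      exact (Word.equiv.apply_symm_apply _).symm
    have := equiv_of_length_le m'
    rw [← hvw] at this
    have : v.toList.length ≤ 1 := this
    omega

section Transfer

universe u v

variable (A : Type u) (B : Type v) [Group A] [Group B]

abbrev fam : Bool → Type (max u v) := fun b => cond b (ULift A) (ULift B)

instance : (b : Bool) → Group (fam A B b)
  | true => inferInstanceAs (Group (ULift A))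
  | false => inferInstanceAs (Group (ULift B))

/-- The canonical hom from the binary coproduct to the indexed coproduct. -/
def toI : Coprod A B →* CoprodI (fam A B) :=
  Coprod.lift ((of (i := true)).comp (MulEquiv.ulift.symm : A ≃* ULift A).toMonoidHom)
    ((of (i := false)).comp (MulEquiv.ulift.symm : B ≃* ULift B).toMonoidHom)

/-- The canonical hom from the indexed coproduct to the binary coproduct. -/
def ofI : CoprodI (fam A B) →* Coprod A B :=
  CoprodI.lift (fun b => Bool.rec
    (motive := fun b => fam A B b →* Coprod A B)
    (Coprod.inr.comp (MulEquiv.ulift : ULift B ≃* B).toMonoidHom)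
    (Coprod.inl.comp (MulEquiv.ulift : ULift A ≃* A).toMonoidHom) b)

lemma ofI_toI : (ofI A B).comp (toI A B) = MonoidHom.id _ := by
  refine Coprod.hom_ext ?_ ?_ <;> ext x <;>
    simp only [MonoidHom.comp_apply, MonoidHom.id_apply, toI, ofI,
      Coprod.lift_apply_inl, Coprod.lift_apply_inr, CoprodI.lift_of] <;> rfl

lemma toI_ofI : (toI A B).comp (ofI A B) = MonoidHom.id _ := by
  refine CoprodI.ext_hom _ _ ?_
  rintro (_ | _) <;> ext x <;>
    simp only [MonoidHom.comp_apply, MonoidHom.id_apply, toI, ofI,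
      Coprod.lift_apply_inl, Coprod.lift_apply_inr, CoprodI.lift_of] <;> rfl

lemma toI_surjective : Function.Surjective (toI A B) := fun y =>
  ⟨ofI A B y, DFunLike.congr_fun (toI_ofI A B) y⟩

lemma toI_injective : Function.Injective (toI A B) := fun x y h => by
  have hx := DFunLike.congr_fun (ofI_toI A B) x
  have hy := DFunLike.congr_fun (ofI_toI A B) y
  simp only [MonoidHom.comp_apply, MonoidHom.id_apply] at hx hy
  rw [← hx, ← hy, h]

lemma range_inl_eq_comap :
    (Coprod.inl : A →* Coprod A B).range
      = Subgroup.comap (toI A B) ((of : fam A B true →* CoprodI (fam A B)).range) := by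
  ext x
  constructor
  · rintro ⟨a, rfl⟩
    exact ⟨ULift.up a, rfl⟩
  · rintro ⟨a, ha⟩
    refine ⟨a.down, toI_injective A B ?_⟩
    exact ha

end Transfer

end FreeFactorAux

open FreeFactorAux in
/-- In a free product `G = A ∗ B` with `A` and `B` nontrivial, the free factor `A`
is equal to its own normalizer in `G`. -/
theorem freeFactor_self_normalizer (A B : Type*) [Group A] [Group B]
    [Nontrivial A] [Nontrivial B] :
    Subgroup.normalizer ((Coprod.inl : A →* Coprod A B).range : Set (Coprod A B))
      = (Coprod.inl : A →* Coprod A B).range := by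
  haveI : Nontrivial (fam A B true) := inferInstanceAs (Nontrivial (ULift A))
  rw [range_inl_eq_comap, ← Subgroup.comap_normalizer_eq_of_surjective _ (toI_surjective A B),
    normalizer_of_range]
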